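/- Let (σ,ω) be a locally finite weight pair in ℝ^n and 1<p≤q<∞, 0<α<n. If the dyadic characteristic A^{α,dy}_{p,q}(σ,ω) = sup over dyadic cubes Q of |Q|^{α/n + 1/q − 1/p} (|Q|_ω/|Q|)^{1/q} (|Q|_σ/|Q|)^{1/p'} is finite, then the dyadic fractional maximal operator M_α^{dy}(fσ)(x) = sup over dyadic Q containing x of |Q|^{α/n−1} ∫_Q f dσ satisfies the weak type inequality sup_{λ>0} λ |{M_α^{dy}(fσ) > λ}|_ω^{1/q} ≤ A^{α,dy}_{p,q}(σ,ω) ‖f‖_{L^p(σ)} for all f ≥ 0. -/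

import Mathlib

open MeasureTheory ENNReal

noncomputable section

/-- The standard dyadic cube of generation `k` indexed by `a ∈ ℤ^n`. -/
def dyadicCube (n : ℕ) (k : ℤ) (a : Fin n → ℤ) : Set (Fin n → ℝ) :=
  {x | ∀ i, (a i : ℝ) * 2 ^ k ≤ x i ∧ x i < ((a i : ℝ) + 1) * 2 ^ k}

/-- The dyadic fractional maximal operator `M_α^{dy}(fσ)`. -/
noncomputable def dyadicMaximal (n : ℕ) (α : ℝ) (σ : Measure (Fin n → ℝ))
    (f : (Fin n → ℝ) → ℝ≥0∞) (x : Fin n → ℝ) : ℝ≥0∞ :=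
  ⨆ (k : ℤ) (a : Fin n → ℤ) (_ : x ∈ dyadicCube n k a),
    ENNReal.ofReal ((2 : ℝ) ^ (k * (n : ℤ))) ^ (α / (n : ℝ) - 1) *
      ∫⁻ y in dyadicCube n k a, f y ∂σ

/-! ### Auxiliary lemmas on dyadic cubes -/

lemma dyadic_step {k k' : ℤ} (h : k ≤ k') {A B : ℤ}
    (hlt : (A : ℝ) * 2 ^ k < (B : ℝ) * 2 ^ k') :
    ((A : ℝ) + 1) * 2 ^ k ≤ (B : ℝ) * 2 ^ k' := by
  have hk' : k' = k + ((k' - k).toNat : ℤ) := by omega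
  set m : ℕ := (k' - k).toNat with hm
  have h2 : (2 : ℝ) ^ k' = (2 : ℝ) ^ (m : ℤ) * 2 ^ k := by
    rw [hk', zpow_add₀ (by norm_num : (2:ℝ) ≠ 0)]; ring
  have hpk : (0 : ℝ) < 2 ^ k := zpow_pos (by norm_num) k
  rw [h2, ← mul_assoc] at hlt ⊢
  have h1 : (A : ℝ) < (B : ℝ) * 2 ^ (m : ℤ) := lt_of_mul_lt_mul_right hlt hpk.le
  have h3 : (A : ℝ) + 1 ≤ (B : ℝ) * 2 ^ (m : ℤ) := by
    rw [zpow_natCast] at h1 ⊢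
    have hi : A < B * 2 ^ m := by exact_mod_cast h1
    have hi' : A + 1 ≤ B * 2 ^ m := by omega
    exact_mod_cast hi'
  exact mul_le_mul_of_nonneg_right h3 hpk.le

lemma dyadicCube_eq_of_mem {n : ℕ} {k : ℤ} {a b : Fin n → ℤ} {x : Fin n → ℝ}
    (ha : x ∈ dyadicCube n k a) (hb : x ∈ dyadicCube n k b) : a = b := by
  funext i
  obtain ⟨h1, h2⟩ := ha i
  obtain ⟨h3, h4⟩ := hb i
  have hpk : (0 : ℝ) < 2 ^ k := zpow_pos (by norm_num) k
  have e1 : (a i : ℝ) < (b i : ℝ) + 1 :=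
    lt_of_mul_lt_mul_right (lt_of_le_of_lt h1 h4) hpk.le
  have e2 : (b i : ℝ) < (a i : ℝ) + 1 :=
    lt_of_mul_lt_mul_right (lt_of_le_of_lt h3 h2) hpk.le
  have f1 : a i < b i + 1 := by exact_mod_cast e1
  have f2 : b i < a i + 1 := by exact_mod_cast e2
  omega

lemma dyadicCube_subset {n : ℕ} {k k' : ℤ} {a a' : Fin n → ℤ} {x : Fin n → ℝ}
    (hkk : k ≤ k') (hx : x ∈ dyadicCube n k a) (hx' : x ∈ dyadicCube n k' a') :
    dyadicCube n k a ⊆ dyadicCube n k' a' := by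
  intro y hy i
  obtain ⟨h1, h2⟩ := hx i
  obtain ⟨h3, h4⟩ := hx' i
  obtain ⟨h5, h6⟩ := hy i
  have claim1 : (a' i : ℝ) * 2 ^ k' ≤ (a i : ℝ) * 2 ^ k := by
    by_contra hcon
    push_neg at hcon
    have := dyadic_step hkk hcon
    linarith
  have claim2 : ((a i : ℝ) + 1) * 2 ^ k ≤ ((a' i : ℝ) + 1) * 2 ^ k' := by
    have hlt : (a i : ℝ) * 2 ^ k < ((a' i + 1 : ℤ) : ℝ) * 2 ^ k' := by push_cast; linarith
    have := dyadic_step hkk hlt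
    push_cast at this
    linarith
  exact ⟨le_trans claim1 h5, lt_of_lt_of_le h6 claim2⟩

lemma measurableSet_dyadicCube {n : ℕ} {k : ℤ} {a : Fin n → ℤ} :
    MeasurableSet (dyadicCube n k a) := by
  have : dyadicCube n k a =
      Set.univ.pi fun i => Set.Ico ((a i : ℝ) * 2 ^ k) (((a i : ℝ) + 1) * 2 ^ k) := by
    ext x
    simp [dyadicCube, Set.mem_univ_pi, Set.mem_Ico]
  rw [this]
  exact MeasurableSet.univ_pi fun i => measurableSet_Ico

/-! ### Maximal cube selection -/

lemma dyadic_maximal_cover (n : ℕ) (Bad : ℤ × (Fin n → ℤ) → Prop) (N : ℤ)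
    {x : Fin n → ℝ} {j0 : ℤ × (Fin n → ℤ)} (h0 : Bad j0) (hN : j0.1 ≤ N)
    (hx : x ∈ dyadicCube n j0.1 j0.2) :
    ∃ j : ℤ × (Fin n → ℤ), (Bad j ∧ j.1 ≤ N ∧ ∀ j', Bad j' → j'.1 ≤ N →
        dyadicCube n j.1 j.2 ⊆ dyadicCube n j'.1 j'.2 → j'.1 ≤ j.1) ∧
      x ∈ dyadicCube n j.1 j.2 := by
  obtain ⟨k1, ⟨hk1N, a1, hbad1, hmem1⟩, hmax⟩ := Int.exists_greatest_of_bdd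
    (P := fun k => k ≤ N ∧ ∃ a, Bad (k, a) ∧ x ∈ dyadicCube n k a)
    ⟨N, fun z hz => hz.1⟩ ⟨j0.1, hN, j0.2, h0, hx⟩
  refine ⟨(k1, a1), ⟨hbad1, hk1N, ?_⟩, hmem1⟩
  intro j' hb' hN' hsub
  exact hmax j'.1 ⟨hN', j'.2, hb', hsub hmem1⟩

lemma dyadic_maximal_disjoint (n : ℕ) (Bad : ℤ × (Fin n → ℤ) → Prop) (N : ℤ) :
    Set.PairwiseDisjoint {j : ℤ × (Fin n → ℤ) | Bad j ∧ j.1 ≤ N ∧ ∀ j', Bad j' → j'.1 ≤ N →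
        dyadicCube n j.1 j.2 ⊆ dyadicCube n j'.1 j'.2 → j'.1 ≤ j.1}
      (fun j => dyadicCube n j.1 j.2) := by
  intro j hj j' hj' hne
  simp only [Function.onFun]
  rw [Set.disjoint_left]
  intro x hx hx'
  obtain ⟨hb, hN, hmax⟩ := hj
  obtain ⟨hb', hN', hmax'⟩ := hj'
  apply hne
  have hkey : j.1 = j'.1 := by
    rcases le_total j.1 j'.1 with h | h
    · exact le_antisymm h (hmax j' hb' hN' (dyadicCube_subset h hx hx'))
    · exact le_antisymm (hmax' j hb hN (dyadicCube_subset h hx' hx)) h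
  have ha : j.2 = j'.2 :=
    dyadicCube_eq_of_mem hx (by rw [hkey]; exact hx' : x ∈ dyadicCube n j.1 j'.2)
  exact Prod.ext hkey ha

/-! ### Elementary `ℝ≥0∞` inequalities -/

lemma tsum_rpow_le_rpow_tsum {ι : Type*} (b : ι → ℝ≥0∞) {r : ℝ} (hr : 1 ≤ r) :
    ∑' i, b i ^ r ≤ (∑' i, b i) ^ r := by
  have h0 : (0:ℝ) ≤ r - 1 := by linarith
  have hsplit : ∀ x : ℝ≥0∞, x ^ r = x ^ (r - 1) * x := by
    intro x
    nth_rewrite 1 [show r = (r - 1) + 1 by ring]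
    rw [ENNReal.rpow_add_of_nonneg _ _ h0 zero_le_one, ENNReal.rpow_one]
  calc ∑' i, b i ^ r = ∑' i, b i ^ (r - 1) * b i := by
        exact tsum_congr fun i => hsplit (b i)
    _ ≤ ∑' i, (∑' j, b j) ^ (r - 1) * b i :=
        ENNReal.tsum_le_tsum fun i =>
          mul_le_mul_left (ENNReal.rpow_le_rpow (ENNReal.le_tsum i) h0) _
    _ = (∑' j, b j) ^ (r - 1) * ∑' i, b i := ENNReal.tsum_mul_left
    _ = (∑' j, b j) ^ r := (hsplit _).symm

/-- The estimate for a single "bad" cube. -/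
lemma cube_estimate (n : ℕ) (p q α : ℝ) (hp : 1 < p) (hq0 : 0 < q)
    (σ ω : Measure (Fin n → ℝ)) (A : ℝ≥0∞) (f : (Fin n → ℝ) → ℝ≥0∞) (hf : Measurable f)
    (lam : ℝ≥0∞) (k : ℤ) (a : Fin n → ℤ)
    (hAk : ENNReal.ofReal ((2 : ℝ) ^ (k * (n : ℤ))) ^ (α / (n : ℝ) + 1 / q - 1 / p) *
          (ω (dyadicCube n k a) / ENNReal.ofReal ((2 : ℝ) ^ (k * (n : ℤ)))) ^ (1 / q) *
          (σ (dyadicCube n k a) / ENNReal.ofReal ((2 : ℝ) ^ (k * (n : ℤ)))) ^ (1 - 1 / p) ≤ A)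
    (hlam : lam < ENNReal.ofReal ((2 : ℝ) ^ (k * (n : ℤ))) ^ (α / (n : ℝ) - 1) *
      ∫⁻ y in dyadicCube n k a, f y ∂σ) :
    lam ^ q * ω (dyadicCube n k a)
      ≤ A ^ q * (∫⁻ y in dyadicCube n k a, f y ^ p ∂σ) ^ (q / p) := by
  have hp0 : (0:ℝ) < p := lt_trans one_pos hp
  have hr1 : (0:ℝ) ≤ 1 / q := by positivity
  have hr2 : (0:ℝ) ≤ 1 - 1 / p := by
    rw [sub_nonneg, div_le_one hp0]; linarith
  set Q := dyadicCube n k a with hQ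
  set V := ENNReal.ofReal ((2 : ℝ) ^ (k * (n : ℤ))) with hV
  have hV0 : V ≠ 0 := by
    rw [hV, Ne, ENNReal.ofReal_eq_zero, not_le]
    exact zpow_pos (by norm_num) _
  have hVt : V ≠ ⊤ := by rw [hV]; exact ENNReal.ofReal_ne_top
  -- Hölder's inequality on the cube
  have hp1 : p - 1 ≠ 0 := by intro h; nlinarith [h]
  have hconj : p.HolderConjugate (p / (p - 1)) := by
    exact (Real.holderConjugate_iff_eq_conjExponent hp).2 rfl
  have holder : (∫⁻ y in Q, f y ∂σ) ≤ (∫⁻ y in Q, f y ^ p ∂σ) ^ (1 / p) * σ Q ^ (1 - 1 / p) := by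
    have h := ENNReal.lintegral_mul_le_Lp_mul_Lq (σ.restrict Q) hconj hf.aemeasurable
      (aemeasurable_const (b := (1 : ℝ≥0∞)))
    simp only [Pi.mul_apply, mul_one, ENNReal.one_rpow, lintegral_one,
      Measure.restrict_apply_univ] at h
    rwa [show 1 / (p / (p - 1)) = 1 - 1 / p by field_simp] at h
  -- the characteristic bound in convenient form
  have hAB : V ^ (α / (n:ℝ) - 1) * ω Q ^ (1 / q) * σ Q ^ (1 - 1 / p) ≤ A := by
    have e : V ^ (α / (n:ℝ) + 1 / q - 1 / p) * (ω Q / V) ^ (1 / q) * (σ Q / V) ^ (1 - 1 / p)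
        = V ^ (α / (n:ℝ) - 1) * ω Q ^ (1 / q) * σ Q ^ (1 - 1 / p) := by
      rw [ENNReal.div_rpow_of_nonneg _ _ hr1, ENNReal.div_rpow_of_nonneg _ _ hr2,
        div_eq_mul_inv (ω Q ^ (1 / q)), div_eq_mul_inv (σ Q ^ (1 - 1 / p)),
        ← ENNReal.rpow_neg V, ← ENNReal.rpow_neg V,
        show α / (n:ℝ) - 1 = (α / (n:ℝ) + 1 / q - 1 / p) + (-(1 / q)) + (-(1 - 1 / p)) by ring,
        ENNReal.rpow_add _ _ hV0 hVt, ENNReal.rpow_add _ _ hV0 hVt]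
      ring
    calc V ^ (α / (n:ℝ) - 1) * ω Q ^ (1 / q) * σ Q ^ (1 - 1 / p)
        = V ^ (α / (n:ℝ) + 1 / q - 1 / p) * (ω Q / V) ^ (1 / q) * (σ Q / V) ^ (1 - 1 / p) :=
          e.symm
      _ ≤ A := hAk
  have step1 : lam * ω Q ^ (1 / q) ≤ A * (∫⁻ y in Q, f y ^ p ∂σ) ^ (1 / p) := by
    calc lam * ω Q ^ (1 / q)
        ≤ (V ^ (α / (n:ℝ) - 1) * ∫⁻ y in Q, f y ∂σ) * ω Q ^ (1 / q) :=
          mul_le_mul_left hlam.le _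
      _ ≤ (V ^ (α / (n:ℝ) - 1) * ((∫⁻ y in Q, f y ^ p ∂σ) ^ (1 / p) * σ Q ^ (1 - 1 / p)))
            * ω Q ^ (1 / q) :=
          mul_le_mul_left (mul_le_mul_right holder _) _
      _ = (V ^ (α / (n:ℝ) - 1) * ω Q ^ (1 / q) * σ Q ^ (1 - 1 / p))
            * (∫⁻ y in Q, f y ^ p ∂σ) ^ (1 / p) := by ring
      _ ≤ A * (∫⁻ y in Q, f y ^ p ∂σ) ^ (1 / p) := mul_le_mul_left hAB _
  have h2 := ENNReal.rpow_le_rpow step1 hq0.le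
  rw [ENNReal.mul_rpow_of_nonneg _ _ hq0.le, ENNReal.mul_rpow_of_nonneg _ _ hq0.le,
    ← ENNReal.rpow_mul, ← ENNReal.rpow_mul, one_div_mul_cancel hq0.ne', ENNReal.rpow_one,
    show 1 / p * q = q / p by ring] at h2
  exact h2

/-! ### Main theorem -/

/-- **Weak type inequality for the dyadic fractional maximal operator.**  If the dyadic
characteristic `A^{α,dy}_{p,q}(σ,ω)` is bounded by `A`, i.e. for every dyadic cube `Q`
(of volume `|Q| = 2^{kn}`), `|Q|^{α/n + 1/q − 1/p} (|Q|_ω/|Q|)^{1/q} (|Q|_σ/|Q|)^{1/p'} ≤ A`,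
then `λ |{M_α^{dy}(fσ) > λ}|_ω^{1/q} ≤ A ‖f‖_{L^p(σ)}` for all `f ≥ 0` and `λ > 0`. -/
theorem dyadicMaximal_weakType (n : ℕ) (hn : 0 < n) (p q α : ℝ)
    (hp : 1 < p) (hpq : p ≤ q) (hα : 0 < α) (hαn : α < n)
    (σ ω : Measure (Fin n → ℝ)) [IsLocallyFiniteMeasure σ] [IsLocallyFiniteMeasure ω]
    (A : ℝ≥0∞)
    (hA : ∀ (k : ℤ) (a : Fin n → ℤ),
      ENNReal.ofReal ((2 : ℝ) ^ (k * (n : ℤ))) ^ (α / (n : ℝ) + 1 / q - 1 / p) *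
          (ω (dyadicCube n k a) / ENNReal.ofReal ((2 : ℝ) ^ (k * (n : ℤ)))) ^ (1 / q) *
          (σ (dyadicCube n k a) / ENNReal.ofReal ((2 : ℝ) ^ (k * (n : ℤ)))) ^ (1 - 1 / p)
        ≤ A) :
    ∀ f : (Fin n → ℝ) → ℝ≥0∞, Measurable f → ∀ lam : ℝ≥0∞,
      lam * (ω {x | lam < dyadicMaximal n α σ f x}) ^ (1 / q)
        ≤ A * (∫⁻ x, f x ^ p ∂σ) ^ (1 / p) := by
  intro f hf lam
  have hp0 : (0:ℝ) < p := lt_trans one_pos hp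
  have hq1 : (1:ℝ) < q := lt_of_lt_of_le hp hpq
  have hq0 : (0:ℝ) < q := lt_trans one_pos hq1
  set I := ∫⁻ x, f x ^ p ∂σ with hIdef
  set Bad : ℤ × (Fin n → ℤ) → Prop := fun j =>
    lam < ENNReal.ofReal ((2 : ℝ) ^ (j.1 * (n : ℤ))) ^ (α / (n : ℝ) - 1) *
      ∫⁻ y in dyadicCube n j.1 j.2, f y ∂σ with hBad
  set EN : ℕ → Set (Fin n → ℝ) := fun N =>
    {x | ∃ j : ℤ × (Fin n → ℤ), Bad j ∧ j.1 ≤ (N : ℤ) ∧ x ∈ dyadicCube n j.1 j.2} with hEN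
  -- the superlevel set is the increasing union of the truncated sets
  have hset : {x | lam < dyadicMaximal n α σ f x} = ⋃ N : ℕ, EN N := by
    ext x
    simp only [Set.mem_setOf_eq, Set.mem_iUnion, dyadicMaximal, lt_iSup_iff, hEN, hBad]
    constructor
    · rintro ⟨k, a, hxa, hlt⟩
      exact ⟨k.toNat, (k, a), hlt, Int.self_le_toNat k, hxa⟩
    · rintro ⟨N, j, hlt, hN, hxj⟩
      exact ⟨j.1, j.2, hxj, hlt⟩
  have hmono : Monotone EN := by
    intro N M hNM x hx
    obtain ⟨j, h1, h2, h3⟩ := hx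
    exact ⟨j, h1, le_trans h2 (by exact_mod_cast hNM), h3⟩
  have hω : ω {x | lam < dyadicMaximal n α σ f x} = ⨆ N : ℕ, ω (EN N) := by
    rw [hset]
    exact hmono.directed_le.measure_iUnion
  -- the bound for each truncation
  have hboundN : ∀ N : ℕ, lam ^ q * ω (EN N) ≤ A ^ q * I ^ (q / p) := by
    intro N
    set SN : Set (ℤ × (Fin n → ℤ)) :=
      {j | Bad j ∧ j.1 ≤ (N : ℤ) ∧ ∀ j', Bad j' → j'.1 ≤ (N : ℤ) →
        dyadicCube n j.1 j.2 ⊆ dyadicCube n j'.1 j'.2 → j'.1 ≤ j.1} with hSN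
    have hcover : EN N ⊆ ⋃ j ∈ SN, dyadicCube n j.1 j.2 := by
      rintro x ⟨j0, hb0, hN0, hx0⟩
      obtain ⟨j, hjS, hxj⟩ := dyadic_maximal_cover n Bad (N : ℤ) hb0 hN0 hx0
      exact Set.mem_biUnion (by rw [hSN]; exact hjS) hxj
    have hpd := dyadic_maximal_disjoint n Bad (N : ℤ)
    have hdisj : Pairwise (Function.onFun Disjoint fun j : SN =>
        dyadicCube n (j : ℤ × (Fin n → ℤ)).1 (j : ℤ × (Fin n → ℤ)).2) := by
      intro i j hij
      exact hpd i.2 j.2 (Subtype.coe_injective.ne hij)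
    have h1qp : (1:ℝ) ≤ q / p := by
      rw [le_div_iff₀ hp0]; linarith
    calc lam ^ q * ω (EN N)
        ≤ lam ^ q * ∑' j : SN, ω (dyadicCube n (j : ℤ × (Fin n → ℤ)).1
            (j : ℤ × (Fin n → ℤ)).2) :=
          mul_le_mul_right ((measure_mono hcover).trans
            (measure_biUnion_le ω (Set.to_countable SN) _)) _
      _ = ∑' j : SN, lam ^ q * ω (dyadicCube n (j : ℤ × (Fin n → ℤ)).1
            (j : ℤ × (Fin n → ℤ)).2) := ENNReal.tsum_mul_left.symm
      _ ≤ ∑' j : SN, A ^ q * (∫⁻ y in dyadicCube n (j : ℤ × (Fin n → ℤ)).1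
            (j : ℤ × (Fin n → ℤ)).2, f y ^ p ∂σ) ^ (q / p) := by
          refine ENNReal.tsum_le_tsum fun j => ?_
          exact cube_estimate n p q α hp hq0 σ ω A f hf lam _ _ (hA _ _) j.2.1
      _ = A ^ q * ∑' j : SN, (∫⁻ y in dyadicCube n (j : ℤ × (Fin n → ℤ)).1
            (j : ℤ × (Fin n → ℤ)).2, f y ^ p ∂σ) ^ (q / p) := ENNReal.tsum_mul_left
      _ ≤ A ^ q * (∑' j : SN, ∫⁻ y in dyadicCube n (j : ℤ × (Fin n → ℤ)).1
            (j : ℤ × (Fin n → ℤ)).2, f y ^ p ∂σ) ^ (q / p) :=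
          mul_le_mul_right (tsum_rpow_le_rpow_tsum _ h1qp) _
      _ ≤ A ^ q * I ^ (q / p) := by
          refine mul_le_mul_right (ENNReal.rpow_le_rpow ?_ (by positivity)) _
          rw [← lintegral_iUnion (fun _ => measurableSet_dyadicCube) hdisj (fun y => f y ^ p)]
          rw [hIdef]
          exact lintegral_mono' Measure.restrict_le_self le_rfl
  have hfin : lam ^ q * ω {x | lam < dyadicMaximal n α σ f x} ≤ A ^ q * I ^ (q / p) := by
    rw [hω, ENNReal.mul_iSup]
    exact iSup_le hboundN
  have h2 := ENNReal.rpow_le_rpow hfin (by positivity : (0:ℝ) ≤ 1 / q)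
  rw [ENNReal.mul_rpow_of_nonneg _ _ (by positivity : (0:ℝ) ≤ 1 / q),
    ENNReal.mul_rpow_of_nonneg _ _ (by positivity : (0:ℝ) ≤ 1 / q),
    ← ENNReal.rpow_mul lam, ← ENNReal.rpow_mul A, ← ENNReal.rpow_mul I,
    mul_one_div_cancel hq0.ne', ENNReal.rpow_one, ENNReal.rpow_one,
    show q / p * (1 / q) = 1 / p by field_simp] at h2
  exact h2

end
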